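/- For sufficiently small σ > 0, the integral over ℝ² of the square of the positive part of σ - (|x|² - 1)² equals (16π/15)·σ^{5/2}. -/

import Mathlib

open MeasureTheory Real Set

/-- For sufficiently small `σ > 0` (in fact for `0 < σ ≤ 1`), the integral over `ℝ²` of the
square of the positive part of `σ - (|x|² - 1)²` equals `(16π/15) σ^{5/2}`. -/
theorem integral_sq_posPart_eq (σ : ℝ) (hσ : 0 < σ) (hσ' : σ ≤ 1) :
    (∫ x : EuclideanSpace ℝ (Fin 2), (max (σ - (‖x‖ ^ 2 - 1) ^ 2) 0) ^ 2)
      = (16 * Real.pi / 15) * σ ^ ((5 : ℝ) / 2) := by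
  set s := Real.sqrt σ with hs
  have hs0 : 0 < s := Real.sqrt_pos.2 hσ
  have hs1 : s ≤ 1 := by
    rw [hs, show (1:ℝ) = Real.sqrt 1 by simp]; exact Real.sqrt_le_sqrt hσ'
  have hss : s ^ 2 = σ := Real.sq_sqrt hσ.le
  set G : ℝ → ℝ := fun u => (max (σ - (u - 1) ^ 2) 0) ^ 2 with hG
  have hGc : Continuous G := by
    apply Continuous.pow
    exact (continuous_const.sub ((continuous_id.sub continuous_const).pow 2)).max continuous_const
  set b : ℝ := Real.sqrt (1 + s) with hb
  have hb0 : 0 < b := Real.sqrt_pos.2 (by linarith)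
  have hbb : b ^ 2 = 1 + s := Real.sq_sqrt (by linarith)
  -- polar coordinates
  have h1 := MeasureTheory.integral_fun_norm_addHaar
    (volume : Measure (EuclideanSpace ℝ (Fin 2))) (fun r => (max (σ - (r ^ 2 - 1) ^ 2) 0) ^ 2)
  have hdim : Module.finrank ℝ (EuclideanSpace ℝ (Fin 2)) = 2 := finrank_euclideanSpace_fin
  rw [hdim] at h1
  have hball : ((volume : Measure (EuclideanSpace ℝ (Fin 2))) (Metric.ball 0 1)).toReal = π := by
    rw [EuclideanSpace.volume_ball]
    simp [Real.Gamma_two, Real.sq_sqrt Real.pi_pos.le]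
    rw [show ((1:ℝ)+1) = 2 by norm_num, Real.Gamma_two]
    simp [Real.pi_pos.le]
  rw [measureReal_def, hball] at h1
  -- the radial integral
  have h2 : (∫ y in Ioi (0:ℝ), y ^ (2 - 1) • (max (σ - (y ^ 2 - 1) ^ 2) 0) ^ 2)
      = ∫ y in Ioc (0:ℝ) b, y * G (y ^ 2) := by
    rw [setIntegral_eq_of_subset_of_forall_diff_eq_zero measurableSet_Ioi
      Ioc_subset_Ioi_self]
    · apply setIntegral_congr_fun measurableSet_Ioc
      intro y hy; simp [hG, smul_eq_mul, mul_comm]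
    · intro y hy
      obtain ⟨hy1, hy2⟩ := hy
      have hyb : b < y := (by simpa using hy2 : 0 < y → b < y) hy1
      have : 1 + s < y ^ 2 := by
        calc 1 + s = b ^ 2 := hbb.symm
        _ < y ^ 2 := by nlinarith [(show (0:ℝ) < y from hy1).le]
      have : σ - (y ^ 2 - 1) ^ 2 ≤ 0 := by nlinarith
      simp [max_eq_right this]
  have h3 : (∫ y in Ioc (0:ℝ) b, y * G (y ^ 2)) = ∫ y in (0:ℝ)..b, y * G (y ^ 2) := by
    rw [intervalIntegral.integral_of_le hb0.le]
  -- substitution u = y^2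
  have h4 : (∫ y in (0:ℝ)..b, y * G (y ^ 2)) = (1/2) * ∫ u in (0:ℝ)..(1+s), G u := by
    have := intervalIntegral.integral_comp_mul_deriv (a := 0) (b := b)
      (f := fun y => y ^ 2) (f' := fun y => 2 * y) (g := G)
      (fun x _ => by simpa using (hasDerivAt_pow 2 x)) (by fun_prop) hGc
    simp only [Function.comp_def] at this
    norm_num at this
    rw [hbb] at this
    rw [← this, ← intervalIntegral.integral_const_mul]
    apply intervalIntegral.integral_congr
    intro x _
    ring
  -- split the integral
  have hint : ∀ a c : ℝ, IntervalIntegrable G volume a c :=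
    fun a c => hGc.intervalIntegrable a c
  have h5 : (∫ u in (0:ℝ)..(1+s), G u) = (∫ u in (0:ℝ)..(1-s), G u) + ∫ u in (1-s)..(1+s), G u :=
    (intervalIntegral.integral_add_adjacent_intervals (hint 0 (1-s)) (hint (1-s) (1+s))).symm
  have h6 : (∫ u in (0:ℝ)..(1-s), G u) = 0 := by
    have heq : EqOn G (fun _ => (0:ℝ)) (uIcc 0 (1-s)) := by
      intro u hu
      rw [uIcc_of_le (by linarith)] at hu
      have h1u : u - 1 ≤ -s := by linarith [hu.2]
      have : σ - (u - 1) ^ 2 ≤ 0 := by nlinarith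
      simp [hG, max_eq_right this]
    rw [intervalIntegral.integral_congr heq, intervalIntegral.integral_zero]
  have h7 : (∫ u in (1-s)..(1+s), G u) = ∫ v in (-s)..s, (σ - v ^ 2) ^ 2 := by
    rw [show (∫ v in (-s)..s, (σ - v^2)^2) = ∫ v in (1-s-1)..(1+s-1), (σ - v^2)^2 by norm_num,
      ← intervalIntegral.integral_comp_sub_right (fun v => (σ - v ^ 2) ^ 2) 1]
    apply intervalIntegral.integral_congr
    intro u hu
    rw [uIcc_of_le (by linarith)] at hu
    have : 0 ≤ σ - (u - 1) ^ 2 := by nlinarith [hu.1, hu.2]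
    simp [hG, max_eq_left this]
  have h8 : (∫ v in (-s)..s, (σ - v ^ 2) ^ 2) = 16/15 * s ^ 5 := by
    have expand : ∀ v : ℝ, (σ - v ^ 2) ^ 2 = σ ^ 2 - 2 * σ * v ^ 2 + v ^ 4 := fun v => by ring
    simp_rw [expand]
    rw [intervalIntegral.integral_add (((intervalIntegrable_const).sub
        ((by fun_prop : Continuous fun v : ℝ => 2 * σ * v ^ 2).intervalIntegrable _ _)))
        ((continuous_pow 4).intervalIntegrable _ _),
      intervalIntegral.integral_sub intervalIntegrable_const
        ((by fun_prop : Continuous fun v : ℝ => 2 * σ * v ^ 2).intervalIntegrable _ _),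
      intervalIntegral.integral_const, intervalIntegral.integral_const_mul,
      integral_pow, integral_pow]
    have : σ = s ^ 2 := hss.symm
    rw [this]; simp only [smul_eq_mul]; ring
  have hpow : σ ^ ((5:ℝ)/2) = s ^ 5 := by
    rw [show ((5:ℝ)/2) = (1/2) * 5 by norm_num, Real.rpow_mul hσ.le, ← Real.sqrt_eq_rpow,
      show ((5:ℝ) = ((5:ℕ):ℝ)) by norm_num, Real.rpow_natCast]
  rw [h1, h2, h3, h4, h5, h6, h7, h8, hpow]
  simp only [smul_eq_mul, nsmul_eq_mul]
  push_cast
  ring
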